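/- Let F satisfy F(k+m) = λ_K(k,m)·F(k) + λ_M(k,m)·F(m) for all k, m ≥ 1, with λ_K, λ_M taking values in ℕ. Then for any composition b₁ + ... + b_k = n into positive parts, the multi F-nomial coefficient satisfies the recurrence C_F(n; b_1,...,b_k) = Σ_{s=1}^{k} λ_s(β)·C_F(n−1; b_1,...,b_{s-1}, b_s − 1, b_{s+1},...,b_k), where λ_s(β) = λ_K(b_s, Σ_{i>s} b_i)·∏_{i<s} λ_M(b_i, Σ_{j>i} b_j) (interpreting λ_K(·,0) = 1), stated as an identity over ℚ (or assuming all multi F-nomial coefficients are integers). -/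

import Mathlib

/-- The F-factorial. -/
def Ffact (F : ℕ → ℕ) (n : ℕ) : ℕ := ∏ i ∈ Finset.range n, F (i + 1)

/-- The coefficient `λ_s(β)`. -/
def lamCoef (lamK lamM : ℕ → ℕ → ℕ) {k : ℕ} (b : Fin k → ℕ) (s : Fin k) : ℕ :=
  (if (∑ i ∈ Finset.univ.filter (fun i => s < i), b i) = 0 then 1
     else lamK (b s) (∑ i ∈ Finset.univ.filter (fun i => s < i), b i)) *
  ∏ i ∈ Finset.univ.filter (fun i => i < s),
    lamM (b i) (∑ j ∈ Finset.univ.filter (fun j => i < j), b j)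

lemma filterGt_zero {m : ℕ} (f : Fin (m+1) → ℕ) :
    ∑ i ∈ Finset.univ.filter (fun i => (0 : Fin (m+1)) < i), f i = ∑ j : Fin m, f j.succ := by
  rw [Finset.sum_filter, Fin.sum_univ_succ]
  simp [Fin.succ_pos]

lemma filterGt_succ {m : ℕ} (s : Fin m) (f : Fin (m+1) → ℕ) :
    ∑ i ∈ Finset.univ.filter (fun i => s.succ < i), f i =
      ∑ j ∈ Finset.univ.filter (fun j => s < j), f j.succ := by
  rw [Finset.sum_filter, Finset.sum_filter, Fin.sum_univ_succ]
  simp [Fin.succ_lt_succ_iff]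

lemma filterLt_zero {m : ℕ} (f : Fin (m+1) → ℕ) :
    ∏ i ∈ Finset.univ.filter (fun i => i < (0 : Fin (m+1))), f i = 1 := by
  rw [Finset.prod_filter]
  simp

lemma filterLt_succ {m : ℕ} (s : Fin m) (f : Fin (m+1) → ℕ) :
    ∏ i ∈ Finset.univ.filter (fun i => i < s.succ), f i =
      f 0 * ∏ j ∈ Finset.univ.filter (fun j => j < s), f j.succ := by
  rw [Finset.prod_filter, Finset.prod_filter, Fin.prod_univ_succ]
  simp [Fin.succ_lt_succ_iff, Fin.succ_pos]

/-- The key identity `F(n) = Σ_s λ_s(β)·F(b_s)`. -/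
lemma keyF (F : ℕ → ℕ) (lamK lamM : ℕ → ℕ → ℕ)
    (h : ∀ k m, 1 ≤ k → 1 ≤ m → F (k + m) = lamK k m * F k + lamM k m * F m) :
    ∀ (k : ℕ) (b : Fin k → ℕ), (∀ i, 1 ≤ b i) → 1 ≤ k →
      F (∑ i, b i) = ∑ s, lamCoef lamK lamM b s * F (b s) := by
  intro k
  induction k with
  | zero => intro b _ hk; omega
  | succ m ih =>
    intro b hb _
    match m with
    | 0 =>
      have e1 : (Finset.univ.filter (fun i : Fin 1 => (0:Fin 1) < i)) = ∅ := by decide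
      have e2 : (Finset.univ.filter (fun i : Fin 1 => i < (0:Fin 1))) = ∅ := by decide
      simp [lamCoef, e1, e2, Fin.sum_univ_one]
    | m + 1 =>
      have hT : 1 ≤ ∑ j : Fin (m+1), b j.succ :=
        le_trans (hb 1) (Finset.single_le_sum (f := fun j : Fin (m+1) => b j.succ)
          (by intros; exact Nat.zero_le _) (Finset.mem_univ 0))
      have lhs : F (∑ i, b i) = lamK (b 0) (∑ j : Fin (m+1), b j.succ) * F (b 0) +
          lamM (b 0) (∑ j : Fin (m+1), b j.succ) *
            (∑ s : Fin (m+1), lamCoef lamK lamM (fun j => b j.succ) s * F (b s.succ)) := by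
        rw [Fin.sum_univ_succ, h (b 0) _ (hb 0) hT,
          ih (fun j => b j.succ) (fun j => hb j.succ) (by omega)]
      rw [lhs, Fin.sum_univ_succ (f := fun s => lamCoef lamK lamM b s * F (b s))]
      have h0 : lamCoef lamK lamM b 0 = lamK (b 0) (∑ j : Fin (m+1), b j.succ) := by
        rw [lamCoef, filterGt_zero, filterLt_zero, if_neg (by omega)]
        ring
      rw [h0]
      congr 1
      rw [Finset.mul_sum]
      apply Finset.sum_congr rfl
      intro s _
      have hs : lamCoef lamK lamM b s.succ
          = lamM (b 0) (∑ j : Fin (m+1), b j.succ) * lamCoef lamK lamM (fun j => b j.succ) s := by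
        rw [lamCoef, lamCoef, filterGt_succ, filterLt_succ, filterGt_zero]
        have e : ∀ i : Fin (m+1), (∑ j ∈ Finset.univ.filter (fun j : Fin (m+2) => i.succ < j), b j)
            = ∑ j ∈ Finset.univ.filter (fun j : Fin (m+1) => i < j), b j.succ :=
          fun i => filterGt_succ i b
        simp only [e]
        ring
      rw [hs]
      ring

/-- For `F ∈ T_λ`, the multi F-nomial coefficients satisfy the recurrence
`C_F(n; b₁,...,b_k) = Σ_s λ_s(β)·C_F(n−1; b₁,...,b_s − 1,...,b_k)`, stated over `ℚ`. -/
theorem multi_Fnomial_recurrence (F : ℕ → ℕ) (hpos : ∀ n, 1 ≤ n → 1 ≤ F n)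
    (lamK lamM : ℕ → ℕ → ℕ)
    (h : ∀ k m, 1 ≤ k → 1 ≤ m →
      F (k + m) = lamK k m * F k + lamM k m * F m)
    (k : ℕ) (hk : 1 ≤ k) (b : Fin k → ℕ) (hb : ∀ i, 1 ≤ b i)
    (n : ℕ) (hn : 1 ≤ n) (hsum : ∑ i, b i = n) :
    (Ffact F n : ℚ) / ∏ i, (Ffact F (b i) : ℚ) =
      ∑ s : Fin k,
        (((if (∑ i ∈ Finset.univ.filter (fun i => s < i), b i) = 0 then 1
            else lamK (b s) (∑ i ∈ Finset.univ.filter (fun i => s < i), b i)) *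
          ∏ i ∈ Finset.univ.filter (fun i => i < s),
            lamM (b i) (∑ j ∈ Finset.univ.filter (fun j => i < j), b j) : ℕ) : ℚ) *
          ((Ffact F (n - 1) : ℚ) /
            ∏ i, (Ffact F (if i = s then b i - 1 else b i) : ℚ)) := by
  have hFpos : ∀ m, 0 < Ffact F m := by
    intro m
    exact Finset.prod_pos (fun i _ => hpos (i + 1) (by omega))
  have hFne : ∀ m, (Ffact F m : ℚ) ≠ 0 := fun m => Nat.cast_ne_zero.mpr (hFpos m).ne'
  have hPne : (∏ i, (Ffact F (b i) : ℚ)) ≠ 0 :=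
    Finset.prod_ne_zero_iff.mpr (fun i _ => hFne _)
  have hQne : ∀ s : Fin k, (∏ i, (Ffact F (if i = s then b i - 1 else b i) : ℚ)) ≠ 0 :=
    fun s => Finset.prod_ne_zero_iff.mpr (fun i _ => hFne _)
  have hsplit : ∀ m, 1 ≤ m → (Ffact F m : ℚ) = (F m : ℚ) * (Ffact F (m - 1) : ℚ) := by
    intro m hm
    have e : Ffact F m = Ffact F (m - 1) * F m := by
      conv_lhs => rw [show m = (m - 1) + 1 by omega]
      rw [Ffact, Finset.prod_range_succ, show m - 1 + 1 = m by omega]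
      rfl
    rw [e]; push_cast; ring
  have hterm : ∀ s : Fin k,
      (∏ i, (Ffact F (if i = s then b i - 1 else b i) : ℚ)) * (F (b s) : ℚ)
        = ∏ i, (Ffact F (b i) : ℚ) := by
    intro s
    rw [← Finset.mul_prod_erase Finset.univ
          (fun i => (Ffact F (if i = s then b i - 1 else b i) : ℚ)) (Finset.mem_univ s),
        ← Finset.mul_prod_erase Finset.univ
          (fun i => (Ffact F (b i) : ℚ)) (Finset.mem_univ s)]
    simp only [if_pos rfl]
    rw [Finset.prod_congr rfl
        (fun i hi => by rw [if_neg (Finset.mem_erase.mp hi).1] :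
          ∀ i ∈ Finset.univ.erase s,
            (Ffact F (if i = s then b i - 1 else b i) : ℚ) = (Ffact F (b i) : ℚ))]
    rw [hsplit (b s) (hb s)]
    simp only [if_true]
    ring
  have step : ∀ s : Fin k,
      (Ffact F (n - 1) : ℚ) / (∏ i, (Ffact F (if i = s then b i - 1 else b i) : ℚ))
        = (F (b s) : ℚ) * (Ffact F (n - 1) : ℚ) / ∏ i, (Ffact F (b i) : ℚ) := by
    intro s
    rw [div_eq_div_iff (hQne s) hPne, ← hterm s]
    ring
  have hkey := keyF F lamK lamM h k b hb hk
  rw [hsum] at hkey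
  simp only [lamCoef] at hkey
  rw [hsplit n hn, hkey]
  push_cast [Nat.cast_sum]
  rw [Finset.sum_mul, Finset.sum_div]
  apply Finset.sum_congr rfl
  intro s _
  rw [step s]
  ring
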